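/- For every J ≥ 2, the test accuracy of the warm-started model is at most that of the cold-started model: ACC(L_warm^(J)) ≤ ACC(L_cold^(J)). -/

import Mathlib

open Finset

/-- Number of data points in `N` whose feature set contains the feature `v`. -/
def featCount {F X : Type} [DecidableEq F] (feats : X → Finset F)
    (N : Finset X) (v : F) : ℕ :=
  (N.filter fun x => v ∈ feats x).card

/-- `g(v; T, N)`: the frequency of feature `v` among the data points of `N`,
normalized by the size of the full training set `T`. -/
noncomputable def gval {F X : Type} [DecidableEq F] (feats : X → Finset F)
    (T N : Finset X) (v : F) : ℝ :=
  (featCount feats N v : ℝ) / (T.card : ℝ)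

/-- The set of data points of `T` with nonzero gradient: not memorized (not in
`M`) and not well-classified by the learned set `L` (fewer than `τ` of their
features are learned). -/
def active {F X : Type} [DecidableEq F] [DecidableEq X] (feats : X → Finset F) (τ : ℕ)
    (L : Finset F) (M T : Finset X) : Finset X :=
  (T \ M).filter fun x => ((feats x) ∩ L).card < τ

/-- The learned set after the first `i` steps of a run `us` starting from `L0`. -/
def learnedAfter {F : Type} [DecidableEq F] (L0 : Finset F) (us : List F)
    (i : ℕ) : Finset F :=
  L0 ∪ (us.take i).toFinset

/-- `us` is a valid greedy training run on the dataset `T` with initially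
memorized set `M`, starting from the learned set `L0`; `S` is the set of all
features, `τ` the well-classification threshold and `γ` the noise strength.
At every step the model picks a not-yet-learned feature of maximal frequency
`g` among the active (nonzero-gradient) data points; it is learned if its
frequency is at least `γ/|T|`, and at the end of the run every remaining
unlearned feature has frequency below `γ/|T|` (the remaining active points are
then memorized). -/
structure IsRun {F X : Type} [DecidableEq F] [DecidableEq X] (S : Finset F)
    (feats : X → Finset F) (τ : ℕ) (γ : ℝ) (T M : Finset X)
    (L0 : Finset F) (us : List F) : Prop where
  mem : ∀ i (h : i < us.length), us.get ⟨i, h⟩ ∈ S \ learnedAfter L0 us i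
  maximal : ∀ i (h : i < us.length), ∀ u ∈ S \ learnedAfter L0 us i,
    gval feats T (active feats τ (learnedAfter L0 us i) M T) u ≤
      gval feats T (active feats τ (learnedAfter L0 us i) M T) (us.get ⟨i, h⟩)
  threshold : ∀ i (h : i < us.length),
    γ / (T.card : ℝ) ≤
      gval feats T (active feats τ (learnedAfter L0 us i) M T) (us.get ⟨i, h⟩)
  stopped : ∀ u ∈ S \ learnedAfter L0 us us.length,
    gval feats T (active feats τ (learnedAfter L0 us us.length) M T) u <
      γ / (T.card : ℝ)

/-- The memorized set after a run: the previously memorized points together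
with all points that are still active (not well-classified) at the end of the
run. -/
def finalM {F X : Type} [DecidableEq F] [DecidableEq X] (feats : X → Finset F) (τ : ℕ)
    (T M : Finset X) (L0 : Finset F) (us : List F) : Finset X :=
  M ∪ active feats τ (L0 ∪ us.toFinset) M T

/-- The cumulative dataset `T_{1:j}`, the union of the first `j` chunks. -/
def cumT {X : Type} [DecidableEq X] (chunk : ℕ → Finset X) (j : ℕ) : Finset X :=
  (Finset.Icc 1 j).biUnion chunk

/-- `h(v; L)`: the fraction of data points (of one chunk) containing `v` that
are not well-classified by the learned set `L`. -/
noncomputable def hval {F : Type} [DecidableEq F] (C : ℕ) (Sc : Fin C → Finset F)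
    (nA : Fin C → Finset F → ℕ) (τ n : ℕ) (v : F) (L : Finset F) : ℝ :=
  (1 / (n : ℝ)) * ∑ c : Fin C, ∑ A ∈ (Sc c).powerset,
    (nA c A : ℝ) * (if v ∈ A ∧ (A ∩ L).card < τ then 1 else 0)

/-- The test accuracy of a learned feature set `L`. -/
noncomputable def ACC {F : Type} [DecidableEq F] (C : ℕ) (Sc : Fin C → Finset F)
    (nA : Fin C → Finset F → ℕ) (τ n : ℕ) (L : Finset F) : ℝ :=
  1 - ((C : ℝ) - 1) / (C : ℝ) * ((1 / (n : ℝ)) *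
    ∑ c : Fin C, ∑ A ∈ (Sc c).powerset,
      (nA c A : ℝ) * (if (A ∩ L).card < τ then 1 else 0))

section Aux

variable {F X : Type} [DecidableEq F] [DecidableEq X]

lemma take_succ_toFinset (us : List F) (i : ℕ) (h : i < us.length) :
    (us.take (i+1)).toFinset = insert (us.get ⟨i, h⟩) (us.take i).toFinset := by
  rw [← List.take_concat_get h, List.concat_eq_append, List.toFinset_append]
  rw [Finset.insert_eq, Finset.union_comm]
  simp

lemma count_chunk (C : ℕ) (Sc : Fin C → Finset F) (label : X → Fin C)
    (feats : X → Finset F) (nA : Fin C → Finset F → ℕ)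
    (T : Finset X) (τ : ℕ)
    (hfeats : ∀ x, feats x ⊆ Sc (label x))
    (hcountT : ∀ c : Fin C, ∀ A ∈ (Sc c).powerset,
      (T.filter fun x => label x = c ∧ feats x = A).card = nA c A)
    (v : F) (L : Finset F) :
    (T.filter fun x => ((feats x ∩ L).card < τ) ∧ v ∈ feats x).card
      = ∑ c : Fin C, ∑ A ∈ (Sc c).powerset,
          nA c A * (if v ∈ A ∧ (A ∩ L).card < τ then 1 else 0) := by
  rw [Finset.card_filter]
  have key : ∀ x ∈ T, (if ((feats x ∩ L).card < τ) ∧ v ∈ feats x then (1:ℕ) else 0)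
      = ∑ c : Fin C, ∑ A ∈ (Sc c).powerset,
          if (label x = c ∧ feats x = A) ∧ (v ∈ A ∧ (A ∩ L).card < τ) then 1 else 0 := by
    intro x _
    rw [Finset.sum_eq_single (label x)]
    · rw [Finset.sum_eq_single (feats x)]
      · by_cases h1 : v ∈ feats x ∧ (feats x ∩ L).card < τ
        · simp [h1, h1.1, h1.2]
        · simp only [eq_self_iff_true, true_and, if_pos]
          rw [if_neg h1, if_neg (fun h2 : _ ∧ _ => h1 ⟨h2.2, h2.1⟩)]
      · intro A _ hne
        rw [if_neg (fun h2 => hne (h2.1.2.symm))]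
      · intro h
        exact absurd (Finset.mem_powerset.2 (hfeats x)) h
    · intro c _ hne
      apply Finset.sum_eq_zero
      intro A _
      rw [if_neg (fun h2 => hne (h2.1.1.symm))]
    · simp
  rw [Finset.sum_congr rfl key, Finset.sum_comm]
  refine Finset.sum_congr rfl fun c _ => ?_
  rw [Finset.sum_comm]
  refine Finset.sum_congr rfl fun A hA => ?_
  by_cases h : v ∈ A ∧ (A ∩ L).card < τ
  · rw [if_pos h, mul_one, ← hcountT c A hA, Finset.card_filter]
    refine Finset.sum_congr rfl fun x _ => ?_
    by_cases hx2 : label x = c ∧ feats x = A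
    · rw [if_pos hx2, if_pos ⟨hx2, h⟩]
    · rw [if_neg hx2, if_neg (fun h2 => hx2 h2.1)]
  · rw [if_neg h, mul_zero]
    apply Finset.sum_eq_zero
    intro x _
    rw [if_neg (fun h2 => h h2.2)]

end Aux
section Aux2

variable {F X : Type} [DecidableEq F] [DecidableEq X]

lemma mem_cumT_succ (chunk : ℕ → Finset X) (j : ℕ) (x : X) :
    x ∈ cumT chunk (j+1) ↔ x ∈ cumT chunk j ∨ x ∈ chunk (j+1) := by
  simp only [cumT, Finset.mem_biUnion, Finset.mem_Icc]
  constructor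
  · rintro ⟨l, ⟨hl1, hl2⟩, hx⟩
    rcases eq_or_lt_of_le hl2 with h | h
    · exact Or.inr (h ▸ hx)
    · exact Or.inl ⟨l, ⟨hl1, by omega⟩, hx⟩
  · rintro (⟨l, ⟨hl1, hl2⟩, hx⟩ | hx)
    · exact ⟨l, ⟨hl1, by omega⟩, hx⟩
    · exact ⟨j+1, ⟨by omega, le_rfl⟩, hx⟩

lemma chunk_disj_cumT (chunk : ℕ → Finset X)
    (hchunkdisj : ∀ j j', j ≠ j' → Disjoint (chunk j) (chunk j'))
    (j : ℕ) (x : X) (hx : x ∈ chunk (j+1)) : x ∉ cumT chunk j := by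
  intro hc
  simp only [cumT, Finset.mem_biUnion, Finset.mem_Icc] at hc
  obtain ⟨l, ⟨_, hl2⟩, hxl⟩ := hc
  exact Finset.disjoint_left.1 (hchunkdisj (j+1) l (by omega)) hx hxl

lemma cumT_card (chunk : ℕ → Finset X) (n : ℕ)
    (hchunkdisj : ∀ j j', j ≠ j' → Disjoint (chunk j) (chunk j'))
    (hchunkcard : ∀ j, 1 ≤ j → (chunk j).card = n) (j : ℕ) :
    (cumT chunk j).card = j * n := by
  rw [cumT, Finset.card_biUnion (fun a _ b _ hab => hchunkdisj a b hab)]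
  rw [Finset.sum_congr rfl (fun l hl => hchunkcard l (Finset.mem_Icc.1 hl).1)]
  simp [Nat.card_Icc, mul_comm]

lemma cumT_filter_card (chunk : ℕ → Finset X)
    (hchunkdisj : ∀ j j', j ≠ j' → Disjoint (chunk j) (chunk j'))
    (p : X → Prop) [DecidablePred p] (m : ℕ)
    (hm : ∀ l, 1 ≤ l → ((chunk l).filter p).card = m) (j : ℕ) :
    ((cumT chunk j).filter p).card = j * m := by
  rw [cumT, Finset.filter_biUnion]
  rw [Finset.card_biUnion (fun a _ b _ hab =>
    ((hchunkdisj a b hab).mono (Finset.filter_subset p _) (Finset.filter_subset p _)))]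
  rw [Finset.sum_congr rfl (fun l hl => hm l (Finset.mem_Icc.1 hl).1)]
  simp [Nat.card_Icc, mul_comm]

lemma hval_inter {C : ℕ} (Sc : Fin C → Finset F) (nA : Fin C → Finset F → ℕ) (τ n : ℕ)
    (hdisjS : ∀ c c', c ≠ c' → Disjoint (Sc c) (Sc c'))
    (c : Fin C) (u : F) (hu : u ∈ Sc c) (L : Finset F) :
    hval C Sc nA τ n u L = hval C Sc nA τ n u (L ∩ Sc c) := by
  unfold hval
  congr 1
  refine Finset.sum_congr rfl fun c' _ => ?_
  refine Finset.sum_congr rfl fun A hA => ?_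
  congr 1
  by_cases huA : u ∈ A
  · have hc' : c' = c := by
      by_contra hne
      exact Finset.disjoint_left.1 (hdisjS c' c hne) (Finset.mem_powerset.1 hA huA) hu
    subst hc'
    have : A ∩ (L ∩ Sc c') = A ∩ L := by
      ext y
      simp only [Finset.mem_inter]
      exact ⟨fun ⟨h1, h2, _⟩ => ⟨h1, h2⟩,
        fun ⟨h1, h2⟩ => ⟨h1, h2, Finset.mem_powerset.1 hA h1⟩⟩
    rw [this]
  · simp [huA]

end Aux2
section Aux3

variable {F X : Type} [DecidableEq F] [DecidableEq X]

lemma hval_eq_m {C : ℕ} (Sc : Fin C → Finset F) (nA : Fin C → Finset F → ℕ)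
    (τ n : ℕ) (v : F) (L : Finset F) :
    hval C Sc nA τ n v L =
      ((∑ c : Fin C, ∑ A ∈ (Sc c).powerset,
        nA c A * (if v ∈ A ∧ (A ∩ L).card < τ then 1 else 0) : ℕ) : ℝ) / n := by
  rw [hval]
  push_cast
  ring

lemma gval_cold (C : ℕ) (Sc : Fin C → Finset F) (label : X → Fin C)
    (feats : X → Finset F) (nA : Fin C → Finset F → ℕ) (chunk : ℕ → Finset X)
    (τ n : ℕ)
    (hfeats : ∀ x, feats x ⊆ Sc (label x))
    (hchunkdisj : ∀ j j', j ≠ j' → Disjoint (chunk j) (chunk j'))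
    (hchunkcard : ∀ j, 1 ≤ j → (chunk j).card = n)
    (hcount : ∀ j, 1 ≤ j → ∀ c : Fin C, ∀ A ∈ (Sc c).powerset,
      ((chunk j).filter fun x => label x = c ∧ feats x = A).card = nA c A)
    (j : ℕ) (hj : 1 ≤ j) (L : Finset F) (v : F) :
    gval feats (cumT chunk j) (active feats τ L ∅ (cumT chunk j)) v
      = hval C Sc nA τ n v L := by
  rw [gval, featCount, active, Finset.sdiff_empty, Finset.filter_filter]
  rw [cumT_filter_card chunk hchunkdisj _ _
    (fun l hl => count_chunk C Sc label feats nA (chunk l) τ hfeats (hcount l hl) v L) j]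
  rw [cumT_card chunk n hchunkdisj hchunkcard j, hval_eq_m]
  push_cast
  rw [mul_div_mul_left _ _ (by exact_mod_cast (by omega : j ≠ 0) : (j:ℝ) ≠ 0)]

lemma active_warm (feats : X → Finset F) (τ : ℕ) (chunk : ℕ → Finset X)
    (hchunkdisj : ∀ j j', j ≠ j' → Disjoint (chunk j) (chunk j'))
    (L : Finset F) (M : Finset X) (j : ℕ)
    (hM : M ⊆ cumT chunk j)
    (hwell : ∀ x ∈ cumT chunk j, x ∉ M → τ ≤ (feats x ∩ L).card) :
    active feats τ L M (cumT chunk (j+1))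
      = (chunk (j+1)).filter fun x => (feats x ∩ L).card < τ := by
  ext x
  simp only [active, Finset.mem_filter, Finset.mem_sdiff]
  constructor
  · rintro ⟨⟨hxT, hxM⟩, hcond⟩
    refine ⟨?_, hcond⟩
    rcases (mem_cumT_succ chunk j x).1 hxT with h | h
    · exact absurd hcond (not_lt.2 (hwell x h hxM))
    · exact h
  · rintro ⟨hx, hcond⟩
    exact ⟨⟨(mem_cumT_succ chunk j x).2 (Or.inr hx),
      fun hxM => chunk_disj_cumT chunk hchunkdisj j x hx (hM hxM)⟩, hcond⟩

lemma gval_warm (C : ℕ) (Sc : Fin C → Finset F) (label : X → Fin C)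
    (feats : X → Finset F) (nA : Fin C → Finset F → ℕ) (chunk : ℕ → Finset X)
    (τ n : ℕ)
    (hfeats : ∀ x, feats x ⊆ Sc (label x))
    (hchunkdisj : ∀ j j', j ≠ j' → Disjoint (chunk j) (chunk j'))
    (hchunkcard : ∀ j, 1 ≤ j → (chunk j).card = n)
    (hcount : ∀ j, 1 ≤ j → ∀ c : Fin C, ∀ A ∈ (Sc c).powerset,
      ((chunk j).filter fun x => label x = c ∧ feats x = A).card = nA c A)
    (L : Finset F) (M : Finset X) (j : ℕ)
    (hM : M ⊆ cumT chunk j)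
    (hwell : ∀ x ∈ cumT chunk j, x ∉ M → τ ≤ (feats x ∩ L).card)
    (v : F) :
    gval feats (cumT chunk (j+1)) (active feats τ L M (cumT chunk (j+1))) v
      = ((∑ c : Fin C, ∑ A ∈ (Sc c).powerset,
          nA c A * (if v ∈ A ∧ (A ∩ L).card < τ then 1 else 0) : ℕ) : ℝ)
        / (((j:ℝ)+1) * n) := by
  rw [gval, featCount, active_warm feats τ chunk hchunkdisj L M j hM hwell,
    Finset.filter_filter]
  rw [count_chunk C Sc label feats nA (chunk (j+1)) τ hfeats (hcount (j+1) (by omega)) v L]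
  rw [cumT_card chunk n hchunkdisj hchunkcard (j+1)]
  push_cast
  ring

end Aux3
section Aux4

variable {F : Type} [DecidableEq F]

lemma advance (Scc : Finset F) (us : List F) (Q : Finset F)
    (i : ℕ) (hi : i ≤ us.length) (hQ : (us.take i).toFinset ∩ Scc = Q)
    (hne : ¬ (us.toFinset ∩ Scc ⊆ Q)) :
    ∃ (i₁ : ℕ) (h : i₁ < us.length),
      (us.take i₁).toFinset ∩ Scc = Q ∧ us.get ⟨i₁, h⟩ ∈ Scc := by
  classical
  set I : Finset ℕ :=
    (Finset.range (us.length+1)).filter (fun i' => (us.take i').toFinset ∩ Scc = Q) with hI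
  have hiI : i ∈ I := Finset.mem_filter.2 ⟨Finset.mem_range.2 (by omega), hQ⟩
  have hIne : I.Nonempty := ⟨i, hiI⟩
  set i₁ := I.max' hIne with hi₁
  have hmem : i₁ ∈ I := I.max'_mem hIne
  obtain ⟨hrange, hPeq⟩ := Finset.mem_filter.1 hmem
  have hrange' : i₁ ≤ us.length := by
    have := Finset.mem_range.1 hrange; omega
  have hlt : i₁ < us.length := by
    rcases eq_or_lt_of_le hrange' with h | h
    · exfalso
      apply hne
      rw [← hPeq, h, List.take_length]
    · exact h
  refine ⟨i₁, hlt, hPeq, ?_⟩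
  by_contra hnotSc
  have hnext : (us.take (i₁+1)).toFinset ∩ Scc = Q := by
    rw [take_succ_toFinset us i₁ hlt, Finset.insert_inter_of_notMem hnotSc, hPeq]
  have : i₁ + 1 ∈ I := Finset.mem_filter.2 ⟨Finset.mem_range.2 (by omega), hnext⟩
  have := Finset.le_max' I (i₁+1) this
  omega

lemma greedy_subset (C : ℕ) (Sc : Fin C → Finset F)
    (nA : Fin C → Finset F → ℕ) (τ n : ℕ)
    (hdisjS : ∀ c c', c ≠ c' → Disjoint (Sc c) (Sc c'))
    (hinj : ∀ L : Finset F, L ⊆ Finset.univ.biUnion Sc →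
      ∀ c : Fin C, ∀ v₁ ∈ Sc c, ∀ v₂ ∈ Sc c,
        hval C Sc nA τ n v₁ L = hval C Sc nA τ n v₂ L → v₁ = v₂)
    (α β : ℝ) (hβα : β ≤ α) (us vs : List F)
    (memA : ∀ i (h : i < us.length),
      us.get ⟨i,h⟩ ∈ Finset.univ.biUnion Sc \ (us.take i).toFinset)
    (maxA : ∀ i (h : i < us.length), ∀ u ∈ Finset.univ.biUnion Sc \ (us.take i).toFinset,
      hval C Sc nA τ n u (us.take i).toFinset
        ≤ hval C Sc nA τ n (us.get ⟨i,h⟩) (us.take i).toFinset)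
    (thrA : ∀ i (h : i < us.length),
      α ≤ hval C Sc nA τ n (us.get ⟨i,h⟩) (us.take i).toFinset)
    (memB : ∀ j (h : j < vs.length),
      vs.get ⟨j,h⟩ ∈ Finset.univ.biUnion Sc \ (vs.take j).toFinset)
    (maxB : ∀ j (h : j < vs.length), ∀ u ∈ Finset.univ.biUnion Sc \ (vs.take j).toFinset,
      hval C Sc nA τ n u (vs.take j).toFinset
        ≤ hval C Sc nA τ n (vs.get ⟨j,h⟩) (vs.take j).toFinset)
    (stopB : ∀ u ∈ Finset.univ.biUnion Sc \ vs.toFinset,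
      hval C Sc nA τ n u vs.toFinset < β) :
    us.toFinset ⊆ vs.toFinset := by
  classical
  have final : ∀ c : Fin C, us.toFinset ∩ Sc c ⊆ vs.toFinset := by
    intro c
    -- main induction along vs
    have main : ∀ j, j ≤ vs.length →
        (us.toFinset ∩ Sc c ⊆ (vs.take j).toFinset ∩ Sc c) ∨
        ∃ i ≤ us.length, (vs.take j).toFinset ∩ Sc c = (us.take i).toFinset ∩ Sc c := by
      intro j
      induction j with
      | zero => intro _; right; exact ⟨0, Nat.zero_le _, by simp⟩
      | succ j ih =>
        intro hj1
        have hj : j < vs.length := hj1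
        have hmono : (vs.take j).toFinset ∩ Sc c ⊆ (vs.take (j+1)).toFinset ∩ Sc c := by
          apply Finset.inter_subset_inter _ Finset.Subset.rfl
          rw [take_succ_toFinset vs j hj]
          exact Finset.subset_insert _ _
        rcases ih (le_of_lt hj) with h | ⟨i, hi, hQ⟩
        · exact Or.inl (h.trans hmono)
        · by_cases hfin : us.toFinset ∩ Sc c ⊆ (vs.take j).toFinset ∩ Sc c
          · exact Or.inl (hfin.trans hmono)
          · obtain ⟨i₁, h₁, hP, haSc⟩ :=
              advance (Sc c) us ((vs.take j).toFinset ∩ Sc c) i hi hQ.symm hfin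
            set a := us.get ⟨i₁, h₁⟩ with ha
            set w := vs.get ⟨j, hj⟩ with hw
            by_cases hwSc : w ∈ Sc c
            · -- a = w by argmax uniqueness
              have hamem := memA i₁ h₁
              have hwmem := memB j hj
              rw [Finset.mem_sdiff] at hamem hwmem
              have haQ : a ∉ (vs.take j).toFinset ∩ Sc c := by
                rw [← hP]
                intro hmem'
                exact hamem.2 (Finset.mem_inter.1 hmem').1
              have hwQ : w ∉ (vs.take j).toFinset ∩ Sc c :=
                fun hmem' => hwmem.2 (Finset.mem_inter.1 hmem').1
              have haB : a ∈ Finset.univ.biUnion Sc \ (vs.take j).toFinset := by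
                rw [Finset.mem_sdiff]
                exact ⟨hamem.1, fun hh => haQ (Finset.mem_inter.2 ⟨hh, haSc⟩)⟩
              have hwA : w ∈ Finset.univ.biUnion Sc \ (us.take i₁).toFinset := by
                rw [Finset.mem_sdiff]
                refine ⟨hwmem.1, fun hh => hwQ ?_⟩
                rw [← hP] at *
                exact Finset.mem_inter.2 ⟨hh, hwSc⟩
              have h1 := maxB j hj a haB
              have h2 := maxA i₁ h₁ w hwA
              rw [hval_inter Sc nA τ n hdisjS c a haSc ((vs.take j).toFinset),
                hval_inter Sc nA τ n hdisjS c w hwSc ((vs.take j).toFinset)] at h1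
              rw [hval_inter Sc nA τ n hdisjS c a haSc ((us.take i₁).toFinset),
                hval_inter Sc nA τ n hdisjS c w hwSc ((us.take i₁).toFinset), hP] at h2
              have heq : hval C Sc nA τ n a ((vs.take j).toFinset ∩ Sc c)
                  = hval C Sc nA τ n w ((vs.take j).toFinset ∩ Sc c) :=
                le_antisymm h1 h2
              have haw : a = w := by
                apply hinj ((vs.take j).toFinset ∩ Sc c) _ c a haSc w hwSc heq
                intro y hy
                have := (Finset.mem_inter.1 hy).2
                exact Finset.mem_biUnion.2 ⟨c, Finset.mem_univ c, this⟩
              right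
              refine ⟨i₁+1, by omega, ?_⟩
              rw [take_succ_toFinset vs j hj, take_succ_toFinset us i₁ h₁,
                Finset.insert_inter_of_mem hwSc, Finset.insert_inter_of_mem haSc, hP, haw]
            · right
              refine ⟨i, hi, ?_⟩
              rw [take_succ_toFinset vs j hj, Finset.insert_inter_of_notMem hwSc, hQ]
    rcases main vs.length le_rfl with h | ⟨i, hi, hQ⟩
    · rw [List.take_length] at h
      exact h.trans Finset.inter_subset_left
    · rw [List.take_length] at hQ
      by_cases hfin : us.toFinset ∩ Sc c ⊆ vs.toFinset ∩ Sc c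
      · exact hfin.trans Finset.inter_subset_left
      · exfalso
        obtain ⟨i₁, h₁, hP, haSc⟩ :=
          advance (Sc c) us (vs.toFinset ∩ Sc c) i hi hQ.symm hfin
        set a := us.get ⟨i₁, h₁⟩ with ha
        have hamem := memA i₁ h₁
        rw [Finset.mem_sdiff] at hamem
        have haQ : a ∉ vs.toFinset ∩ Sc c := by
          rw [← hP]
          intro hmem'
          exact hamem.2 (Finset.mem_inter.1 hmem').1
        have havs : a ∉ vs.toFinset :=
          fun hh => haQ (Finset.mem_inter.2 ⟨hh, haSc⟩)
        have hstop := stopB a (Finset.mem_sdiff.2 ⟨hamem.1, havs⟩)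
        have hthr := thrA i₁ h₁
        rw [hval_inter Sc nA τ n hdisjS c a haSc ((us.take i₁).toFinset), hP] at hthr
        rw [hval_inter Sc nA τ n hdisjS c a haSc vs.toFinset] at hstop
        linarith
  intro u hu
  have hu' := hu
  rw [List.mem_toFinset] at hu'
  obtain ⟨⟨i, hil⟩, rfl⟩ := List.mem_iff_get.1 hu'
  have := memA i hil
  rw [Finset.mem_sdiff] at this
  obtain ⟨c, _, hc⟩ := Finset.mem_biUnion.1 this.1
  exact final c (Finset.mem_inter.2 ⟨hu, hc⟩)

end Aux4
section Aux5

variable {F : Type} [DecidableEq F]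

lemma ACC_mono (C : ℕ) (Sc : Fin C → Finset F) (nA : Fin C → Finset F → ℕ)
    (τ n : ℕ) (hC : 0 < C) {L L' : Finset F} (h : L ⊆ L') :
    ACC C Sc nA τ n L ≤ ACC C Sc nA τ n L' := by
  rw [ACC, ACC]
  apply sub_le_sub_left
  have hk : (0:ℝ) ≤ ((C:ℝ)-1)/(C:ℝ) := by
    apply div_nonneg _ (by positivity)
    have : (1:ℝ) ≤ (C:ℝ) := by exact_mod_cast hC
    linarith
  apply mul_le_mul_of_nonneg_left _ hk
  apply mul_le_mul_of_nonneg_left _ (by positivity : (0:ℝ) ≤ 1/(n:ℝ))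
  apply Finset.sum_le_sum
  intro c _
  apply Finset.sum_le_sum
  intro A _
  apply mul_le_mul_of_nonneg_left _ (by positivity : (0:ℝ) ≤ (nA c A : ℝ))
  by_cases h' : (A ∩ L').card < τ
  · rw [if_pos h', if_pos (lt_of_le_of_lt
      (Finset.card_le_card (Finset.inter_subset_inter Finset.Subset.rfl h)) h')]
  · rw [if_neg h']
    by_cases h'' : (A ∩ L).card < τ <;> simp [h'']

end Aux5

/-- Theorem 3.4, accuracy part: for every `J ≥ 2` the test
accuracy of the warm-started model is at most that of the cold-started model:
`ACC(L_warm^(J)) ≤ ACC(L_cold^(J))`. -/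
theorem warm_acc_le_cold_acc
    {F X : Type} [DecidableEq F] [DecidableEq X]
    (C K τ : ℕ) (γ : ℝ) (n : ℕ)
    (Sc : Fin C → Finset F) (label : X → Fin C) (feats : X → Finset F)
    (nA : Fin C → Finset F → ℕ) (chunk : ℕ → Finset X)
    (hγ : 0 < γ) (hτK : τ < K)
    (hK : ∀ c, (Sc c).card = K)
    (hdisjS : ∀ c c', c ≠ c' → Disjoint (Sc c) (Sc c'))
    (hfeats : ∀ x, feats x ⊆ Sc (label x))
    (hnA : ∀ c, ∀ A ∈ (Sc c).powerset, 1 ≤ nA c A)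
    (hn : n = ∑ c : Fin C, ∑ A ∈ (Sc c).powerset, nA c A)
    (hchunkdisj : ∀ j j', j ≠ j' → Disjoint (chunk j) (chunk j'))
    (hchunkcard : ∀ j, 1 ≤ j → (chunk j).card = n)
    (hcount : ∀ j, 1 ≤ j → ∀ c : Fin C, ∀ A ∈ (Sc c).powerset,
      ((chunk j).filter fun x => label x = c ∧ feats x = A).card = nA c A)
    (hC : 0 < C) (hτpos : 0 < τ)
    (hinj : ∀ L : Finset F, L ⊆ Finset.univ.biUnion Sc →
      ∀ c : Fin C, ∀ v₁ ∈ Sc c, ∀ v₂ ∈ Sc c,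
        hval C Sc nA τ n v₁ L = hval C Sc nA τ n v₂ L → v₁ = v₂)
    (hii : ∀ c : Fin C, ∃ v : Fin τ → F, Function.Injective v ∧ (∀ i, v i ∈ Sc c) ∧
      ∀ j, 1 ≤ j →
        ((∀ i : Fin τ, (i : ℕ) + 1 < τ →
            γ / (n : ℝ) ≤ gval feats (chunk j) (chunk j) (v i)) ∧
          gval feats (chunk j) (chunk j)
            (v ⟨τ - 1, Nat.sub_lt hτpos Nat.one_pos⟩) < γ / (n : ℝ)))
    (Lw : ℕ → Finset F) (Mw : ℕ → Finset X) (usw : ℕ → List F)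
    (hLw0 : Lw 0 = ∅) (hMw0 : Mw 0 = ∅)
    (hwarm : ∀ j : ℕ,
      IsRun (Finset.univ.biUnion Sc) feats τ γ (cumT chunk (j + 1)) (Mw j) (Lw j)
        (usw (j + 1)) ∧
      Lw (j + 1) = Lw j ∪ (usw (j + 1)).toFinset ∧
      Mw (j + 1) = finalM feats τ (cumT chunk (j + 1)) (Mw j) (Lw j) (usw (j + 1)))
    (usc : ℕ → List F)
    (hcold : ∀ j : ℕ,
      IsRun (Finset.univ.biUnion Sc) feats τ γ (cumT chunk (j + 1)) ∅ ∅ (usc (j + 1)))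
 :
    ∀ J : ℕ, 2 ≤ J →
      ACC C Sc nA τ n (Lw J) ≤ ACC C Sc nA τ n ((usc J).toFinset) := by
  classical
  intro J hJ
  -- positivity of n
  have hnpos : 0 < n := by
    rw [hn]
    calc 0 < nA ⟨0, hC⟩ ∅ := hnA _ _ (Finset.mem_powerset.2 (Finset.empty_subset _))
    _ ≤ ∑ A ∈ (Sc ⟨0,hC⟩).powerset, nA ⟨0,hC⟩ A :=
        Finset.single_le_sum (fun _ _ => Nat.zero_le _)
          (Finset.mem_powerset.2 (Finset.empty_subset _))
    _ ≤ ∑ c : Fin C, ∑ A ∈ (Sc c).powerset, nA c A :=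
        Finset.single_le_sum (f := fun c => ∑ A ∈ (Sc c).powerset, nA c A)
          (fun _ _ => Nat.zero_le _) (Finset.mem_univ _)
  have lA : ∀ (us : List F) (i : ℕ),
      learnedAfter (∅ : Finset F) us i = (us.take i).toFinset := by
    intro us i; rw [learnedAfter, Finset.empty_union]
  have h01 : (0:ℕ) + 1 = 1 := rfl
  have hcard1 : (((cumT chunk 1).card : ℕ) : ℝ) = (n : ℝ) := by
    rw [cumT_card chunk n hchunkdisj hchunkcard 1]; norm_num
  have hcardJ : (((cumT chunk J).card : ℕ) : ℝ) = (J : ℝ) * (n : ℝ) := by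
    rw [cumT_card chunk n hchunkdisj hchunkcard J]; push_cast; ring
  -- run A : experiment 1 of warm start
  obtain ⟨runA, hLw1, hMw1⟩ := hwarm 0
  rw [hMw0] at runA hMw1
  rw [hLw0] at runA hLw1 hMw1
  rw [h01] at runA hLw1 hMw1
  rw [Finset.empty_union] at hLw1
  set L1 := (usw 1).toFinset with hL1
  -- run B : cold experiment J
  have runB := hcold (J - 1)
  rw [(by omega : J - 1 + 1 = J)] at runB
  -- hval forms
  have gc1 := gval_cold C Sc label feats nA chunk τ n hfeats hchunkdisj hchunkcard hcount
    1 (by omega)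
  have gcJ := gval_cold C Sc label feats nA chunk τ n hfeats hchunkdisj hchunkcard hcount
    J (by omega)
  have memA : ∀ i (h : i < (usw 1).length),
      (usw 1).get ⟨i,h⟩ ∈ Finset.univ.biUnion Sc \ ((usw 1).take i).toFinset := by
    intro i h; have := runA.mem i h; rwa [lA] at this
  have maxA : ∀ i (h : i < (usw 1).length),
      ∀ u ∈ Finset.univ.biUnion Sc \ ((usw 1).take i).toFinset,
      hval C Sc nA τ n u ((usw 1).take i).toFinset
        ≤ hval C Sc nA τ n ((usw 1).get ⟨i,h⟩) ((usw 1).take i).toFinset := by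
    intro i h u hu
    have h2 := runA.maximal i h u (by rwa [lA])
    rwa [lA, gc1, gc1] at h2
  have thrA : ∀ i (h : i < (usw 1).length),
      γ / (n : ℝ) ≤ hval C Sc nA τ n ((usw 1).get ⟨i,h⟩) ((usw 1).take i).toFinset := by
    intro i h
    have h2 := runA.threshold i h
    rwa [lA, gc1, hcard1] at h2
  have stopA : ∀ u ∈ Finset.univ.biUnion Sc \ L1,
      hval C Sc nA τ n u L1 < γ / (n : ℝ) := by
    intro u hu
    have h2 := runA.stopped u (by rwa [lA, List.take_length])
    rwa [lA, List.take_length, gc1, hcard1] at h2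
  have memB : ∀ i (h : i < (usc J).length),
      (usc J).get ⟨i,h⟩ ∈ Finset.univ.biUnion Sc \ ((usc J).take i).toFinset := by
    intro i h; have := runB.mem i h; rwa [lA] at this
  have maxB : ∀ i (h : i < (usc J).length),
      ∀ u ∈ Finset.univ.biUnion Sc \ ((usc J).take i).toFinset,
      hval C Sc nA τ n u ((usc J).take i).toFinset
        ≤ hval C Sc nA τ n ((usc J).get ⟨i,h⟩) ((usc J).take i).toFinset := by
    intro i h u hu
    have h2 := runB.maximal i h u (by rwa [lA])
    rwa [lA, gcJ, gcJ] at h2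
  have stopB : ∀ u ∈ Finset.univ.biUnion Sc \ (usc J).toFinset,
      hval C Sc nA τ n u ((usc J).toFinset) < γ / ((J:ℝ) * (n:ℝ)) := by
    intro u hu
    have h2 := runB.stopped u (by rwa [lA, List.take_length])
    rwa [lA, List.take_length, gcJ, hcardJ] at h2
  have hβα : γ / ((J:ℝ) * (n:ℝ)) ≤ γ / (n : ℝ) := by
    apply div_le_div_of_nonneg_left hγ.le (by positivity)
    have h1 : (1:ℝ) ≤ (J:ℝ) := by exact_mod_cast (by omega : 1 ≤ J)
    nlinarith [(by exact_mod_cast hnpos : (0:ℝ) < (n:ℝ))]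
  have hsub : L1 ⊆ (usc J).toFinset :=
    greedy_subset C Sc nA τ n hdisjS hinj (γ / (n:ℝ)) (γ / ((J:ℝ)*(n:ℝ))) hβα
      (usw 1) (usc J) memA maxA thrA memB maxB stopB
  -- the warm runs after the first experiment are empty
  have inv : ∀ j, 1 ≤ j → Lw j = L1 ∧ Mw j ⊆ cumT chunk j ∧
      (∀ x ∈ cumT chunk j, x ∉ Mw j → τ ≤ (feats x ∩ L1).card) := by
    intro j
    induction j with
    | zero => intro h; exact absurd h (by omega)
    | succ j ih =>
      intro _
      by_cases hj0 : j = 0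
      · subst hj0
        refine ⟨hLw1, ?_, ?_⟩
        · rw [hMw1, finalM, Finset.empty_union]
          exact (Finset.filter_subset _ _).trans (Finset.sdiff_subset)
        · intro x hx hxm
          rw [hMw1, finalM, Finset.empty_union] at hxm
          rw [active, Finset.mem_filter, Finset.mem_sdiff] at hxm
          push_neg at hxm
          have := hxm ⟨hx, Finset.notMem_empty x⟩
          rw [Finset.empty_union] at this
          exact this
      · obtain ⟨hL, hM, hwell⟩ := ih (by omega)
        obtain ⟨runj, hLs, hMs⟩ := hwarm j
        rw [hL] at runj hLs hMs
        have hempty : usw (j+1) = [] := by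
          by_contra hne
          have hlen : 0 < (usw (j+1)).length := List.length_pos_iff.2 hne
          have hthr := runj.threshold 0 hlen
          have hmem := runj.mem 0 hlen
          rw [learnedAfter] at hthr hmem
          simp only [List.take_zero, List.toFinset_nil, Finset.union_empty] at hthr hmem
          rw [gval_warm C Sc label feats nA chunk τ n hfeats hchunkdisj hchunkcard hcount
            L1 (Mw j) j hM hwell _] at hthr
          rw [cumT_card chunk n hchunkdisj hchunkcard (j+1)] at hthr
          set m : ℕ := ∑ c : Fin C, ∑ A ∈ (Sc c).powerset,
            nA c A * (if (usw (j+1)).get ⟨0, hlen⟩ ∈ A ∧ (A ∩ L1).card < τ then 1 else 0)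
            with hm
          have hjn : (0:ℝ) < ((j:ℝ)+1) * (n:ℝ) := by
            have : (0:ℝ) < (n:ℝ) := by exact_mod_cast hnpos
            positivity
          have hγm : γ ≤ (m:ℝ) := by
            have hc : (((j+1)*n : ℕ) : ℝ) = ((j:ℝ)+1) * (n:ℝ) := by push_cast; ring
            rw [hc] at hthr
            have := mul_le_mul_of_nonneg_right hthr hjn.le
            rwa [div_mul_cancel₀ _ hjn.ne', div_mul_cancel₀ _ hjn.ne'] at this
          have hval0 : hval C Sc nA τ n ((usw (j+1)).get ⟨0, hlen⟩) L1 = (m:ℝ)/(n:ℝ) :=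
            hval_eq_m Sc nA τ n _ _
          have hstop := stopA _ hmem
          rw [hval0] at hstop
          have : γ / (n:ℝ) ≤ (m:ℝ)/(n:ℝ) :=
            (div_le_div_iff_of_pos_right (by exact_mod_cast hnpos)).2 hγm
          linarith
        rw [hempty] at hLs hMs
        simp only [List.toFinset_nil, Finset.union_empty] at hLs hMs
        rw [finalM] at hMs
        simp only [List.toFinset_nil, Finset.union_empty] at hMs
        refine ⟨hLs, ?_, ?_⟩
        · rw [hMs]
          apply Finset.union_subset
          · exact hM.trans (fun x hx => (mem_cumT_succ chunk j x).2 (Or.inl hx))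
          · exact (Finset.filter_subset _ _).trans (Finset.sdiff_subset)
        · intro x hx hxm
          rw [hMs, Finset.mem_union] at hxm
          push_neg at hxm
          obtain ⟨hxm1, hxm2⟩ := hxm
          rw [active, Finset.mem_filter, Finset.mem_sdiff] at hxm2
          push_neg at hxm2
          exact hxm2 ⟨hx, hxm1⟩
  have hLJ : Lw J = L1 := (inv J (by omega)).1
  rw [hLJ]
  exact ACC_mono C Sc nA τ n hC hsub
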